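/- Let V be a finite set of vertices with open intervals I_v and weights w_v ∈ I_v, and let S be a hyperedge with |S| ≥ 2 in which v has a non-trivial interval. If for every hyperedge S containing v, either (a) v is a minimum-weight vertex of S and w_u ∉ I_v for all u ∈ S \ {v}, or (b) v is not minimum-weight in S and the minimum weight of S is not in I_v, then V \ {v} is a feasible query set, i.e., v is not mandatory. -/
import Mathlib


open Finset

/-- Lower endpoint of vertex `v`'s interval after querying the set `Q`. -/
def qlo {V : Type*} [DecidableEq V] (L w : V → ℝ) (Q : Finset V) (v : V) : ℝ :=
  if v ∈ Q then w v else L v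

/-- Upper endpoint of vertex `v`'s interval after querying the set `Q`. -/
def qhi {V : Type*} [DecidableEq V] (U w : V → ℝ) (Q : Finset V) (v : V) : ℝ :=
  if v ∈ Q then w v else U v

/-- The query set `Q` suffices to orient the hyperedge `S`: some vertex of `S`
has its (updated) interval weakly below all other (updated) intervals of `S`. -/
def Solves {V : Type*} [DecidableEq V] (L U w : V → ℝ) (Q : Finset V) (S : Finset V) : Prop :=
  ∃ m ∈ S, ∀ u ∈ S, u ≠ m → qhi U w Q m ≤ qlo L w Q u

theorem stmt2 {V : Type*} [Fintype V] [DecidableEq V] (L U w : V → ℝ)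
    (hw : ∀ x : V, w x ∈ Set.Ioo (L x) (U x))
    (E : Finset (Finset V)) (v : V)
    (hnontriv : L v < U v)
    (hcard : ∀ S ∈ E, 2 ≤ S.card)
    (hcase : ∀ S ∈ E, v ∈ S →
      ((∀ x ∈ S, w v ≤ w x) ∧ ∀ u ∈ S, u ≠ v → w u ∉ Set.Ioo (L v) (U v)) ∨
      ((∃ u ∈ S, w u < w v) ∧
        ∀ u ∈ S, (∀ x ∈ S, w u ≤ w x) → w u ∉ Set.Ioo (L v) (U v))) :
    ∀ S ∈ E, Solves L U w (Finset.univ.erase v) S := by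
  intro S hS
  have hSne : S.Nonempty := Finset.card_pos.mp (by have := hcard S hS; omega)
  obtain ⟨m, hmS, hmin⟩ := S.exists_min_image w hSne
  have hvQ : v ∉ Finset.univ.erase v := fun h => (Finset.mem_erase.mp h).1 rfl
  by_cases hvS : v ∈ S
  · rcases hcase S hS hvS with ⟨hvmin, hno⟩ | ⟨⟨u0, hu0S, hu0⟩, hno⟩
    · refine ⟨v, hvS, ?_⟩
      intro u huS hne
      have huQ : u ∈ Finset.univ.erase v := Finset.mem_erase.mpr ⟨hne, Finset.mem_univ u⟩
      simp only [qhi, qlo, if_pos huQ, if_neg hvQ]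
      have h1 : L v < w u := lt_of_lt_of_le (hw v).1 (hvmin u huS)
      by_contra hlt
      exact hno u huS hne ⟨h1, lt_of_not_ge hlt⟩
    · have hmv : m ≠ v := by
        intro h; subst h
        exact absurd (hmin u0 hu0S) (not_le.mpr hu0)
      have hmQ : m ∈ Finset.univ.erase v := Finset.mem_erase.mpr ⟨hmv, Finset.mem_univ m⟩
      refine ⟨m, hmS, ?_⟩
      intro u huS hne
      by_cases huv : u = v
      · simp only [qhi, qlo, if_pos hmQ, huv, if_neg hvQ]
        have h2 : w m < U v := lt_of_le_of_lt (hmin v hvS) (hw v).2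
        by_contra hlt
        exact hno m hmS hmin ⟨lt_of_not_ge hlt, h2⟩
      · have huQ : u ∈ Finset.univ.erase v := Finset.mem_erase.mpr ⟨huv, Finset.mem_univ u⟩
        simp only [qhi, qlo, if_pos hmQ, if_pos huQ]
        exact hmin u huS
  · refine ⟨m, hmS, ?_⟩
    intro u huS hne
    have hmQ : m ∈ Finset.univ.erase v :=
      Finset.mem_erase.mpr ⟨fun h => hvS (h ▸ hmS), Finset.mem_univ m⟩
    have huQ : u ∈ Finset.univ.erase v :=
      Finset.mem_erase.mpr ⟨fun h => hvS (h ▸ huS), Finset.mem_univ u⟩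
    simp only [qhi, qlo, if_pos hmQ, if_pos huQ]
    exact hmin u huS
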